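/- arXiv:1008.0595 — 2 statements merged into one kernel-verified Lean document; each statement's English description precedes it below -/
import Mathlib

section
/- For every integer n ≥ 5, the graph obtained by removing one edge from the complete graph K_n is not JIS. -/
/-- A finite simple graph `G` is JIS (isomorphic to an induced subgraph of a Johnson graph)
if for some positive integer `n` there is an injective assignment `v ↦ S v` of `n`-element
finite subsets of `ℕ` to the vertices of `G` such that two distinct vertices `v` and `w`
are adjacent if and only if `|S v ∩ S w| = n - 1`. -/
def IsJIS {V : Type*} [Fintype V] (G : SimpleGraph V) : Prop :=
  ∃ n : ℕ, 0 < n ∧ ∃ S : V → Finset ℕ, Function.Injective S ∧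
    (∀ v, (S v).card = n) ∧
    ∀ v w : V, v ≠ w → (G.Adj v w ↔ (S v ∩ S w).card = n - 1)

lemma jis_aux {m : ℕ} (A B C : Finset ℕ)
    (hA : A.card = m) (hB : B.card = m) (hC : C.card = m)
    (hABne : (A ∩ B).card + 2 ≤ m)
    (hCA : (A ∩ C).card = m - 1) (hCB : (B ∩ C).card = m - 1) :
    ∃ x y, x ∈ A ∧ x ∉ B ∧ y ∈ B ∧ y ∉ A ∧ C = insert y (A.erase x) ∧
      (A ∩ B).card + 2 = m := by
  have hm2 : 2 ≤ m := by omega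
  have h1 := Finset.card_sdiff_add_card_inter A C
  have h2 := Finset.card_sdiff_add_card_inter C A
  rw [Finset.inter_comm C A] at h2
  have hAC1 : (A \ C).card = 1 := by omega
  have hCA1 : (C \ A).card = 1 := by omega
  obtain ⟨x, hx⟩ := Finset.card_eq_one.mp hAC1
  obtain ⟨y, hy⟩ := Finset.card_eq_one.mp hCA1
  have hxA : x ∈ A ∧ x ∉ C := by rw [← Finset.mem_sdiff, hx]; simp
  have hyC : y ∈ C ∧ y ∉ A := by rw [← Finset.mem_sdiff, hy]; simp
  have hACerase : A ∩ C = A.erase x := by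
    rw [← Finset.sdiff_sdiff_self_left A C, hx, Finset.erase_eq]
  have hCeq : C = insert y (A.erase x) := by
    have h3 := Finset.sdiff_union_inter C A
    rw [Finset.inter_comm C A, hACerase, hy] at h3
    rw [← h3]; ext z; simp [or_comm]
  have hyB : y ∈ B := by
    by_contra hyB
    have hsub : B ∩ C ⊆ A ∩ B := by
      intro z hz
      rw [Finset.mem_inter] at hz
      rw [hCeq, Finset.mem_insert, Finset.mem_erase] at hz
      rw [Finset.mem_inter]
      rcases hz.2 with h | h
      · exact absurd (h ▸ hz.1) hyB
      · exact ⟨h.2, hz.1⟩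
    have := Finset.card_le_card hsub
    omega
  have hBC_sub : B ∩ C ⊆ insert y ((A ∩ B).erase x) := by
    intro z hz
    rw [Finset.mem_inter] at hz
    rw [hCeq, Finset.mem_insert, Finset.mem_erase] at hz
    rw [Finset.mem_insert, Finset.mem_erase, Finset.mem_inter]
    rcases hz.2 with h | h
    · exact Or.inl h
    · exact Or.inr ⟨h.1, h.2, hz.1⟩
  have hxB : x ∉ B := by
    by_contra hxB
    have h1' := Finset.card_le_card hBC_sub
    have h2' := Finset.card_insert_le y ((A ∩ B).erase x)
    have h3' : ((A ∩ B).erase x).card = (A ∩ B).card - 1 :=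
      Finset.card_erase_of_mem (Finset.mem_inter.mpr ⟨hxA.1, hxB⟩)
    have h4' : 1 ≤ (A ∩ B).card := Finset.card_pos.mpr ⟨x, Finset.mem_inter.mpr ⟨hxA.1, hxB⟩⟩
    omega
  have hBC_eq : B ∩ C = insert y (A ∩ B) := by
    rw [hCeq]; ext z
    simp only [Finset.mem_inter, Finset.mem_insert, Finset.mem_erase]
    constructor
    · rintro ⟨hzB, h | ⟨hzx, hzA⟩⟩
      · exact Or.inl h
      · exact Or.inr ⟨hzA, hzB⟩
    · rintro (rfl | ⟨hzA, hzB⟩)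
      · exact ⟨hyB, Or.inl rfl⟩
      · exact ⟨hzB, Or.inr ⟨fun h => hxB (h ▸ hzB), hzA⟩⟩
  have hcardBC : (B ∩ C).card = (A ∩ B).card + 1 := by
    rw [hBC_eq, Finset.card_insert_of_notMem (fun h => hyC.2 (Finset.mem_inter.mp h).1)]
  exact ⟨x, y, hxA.1, hxB, hyB, hyC.2, hCeq, by omega⟩

lemma jis_aux2 {m : ℕ} (A C D : Finset ℕ) (x y x' y' : ℕ) (hA : A.card = m) (hm : 2 ≤ m)
    (hxA : x ∈ A) (hx'A : x' ∈ A) (hyA : y ∉ A) (hy'A : y' ∉ A)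
    (hC : C = insert y (A.erase x)) (hD : D = insert y' (A.erase x'))
    (hxx : x ≠ x') (hyy : y ≠ y') : (C ∩ D).card ≠ m - 1 := by
  have hset : C ∩ D = (A.erase x).erase x' := by
    rw [hC, hD]; ext z
    simp only [Finset.mem_inter, Finset.mem_insert, Finset.mem_erase]
    constructor
    · rintro ⟨rfl | ⟨hzx, hzA⟩, h2⟩
      · rcases h2 with rfl | ⟨_, hzA⟩
        · exact absurd rfl hyy
        · exact absurd hzA hyA
      · rcases h2 with rfl | ⟨hzx', _⟩
        · exact absurd hzA hy'A
        · exact ⟨hzx', hzx, hzA⟩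
    · rintro ⟨hzx', hzx, hzA⟩
      exact ⟨Or.inr ⟨hzx, hzA⟩, Or.inr ⟨hzx', hzA⟩⟩
  rw [hset, Finset.card_erase_of_mem (Finset.mem_erase.mpr ⟨Ne.symm hxx, hx'A⟩),
    Finset.card_erase_of_mem hxA, hA]
  omega

lemma grid_bool : ∀ x1 x2 x3 y1 y2 y3 : Bool,
    (x1 = x2 ∨ y1 = y2) → (x1 = x3 ∨ y1 = y3) → (x2 = x3 ∨ y2 = y3) →
    ¬ (x1 = x2 ∧ y1 = y2) → ¬ (x1 = x3 ∧ y1 = y3) → ¬ (x2 = x3 ∧ y2 = y3) → False := by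
  decide

lemma grid_lemma (p q r s x1 x2 x3 y1 y2 y3 : ℕ) (hpq : p ≠ q) (hrs : r ≠ s)
    (hX1 : x1 = p ∨ x1 = q) (hX2 : x2 = p ∨ x2 = q) (hX3 : x3 = p ∨ x3 = q)
    (hY1 : y1 = r ∨ y1 = s) (hY2 : y2 = r ∨ y2 = s) (hY3 : y3 = r ∨ y3 = s)
    (con12 : x1 = x2 ∨ y1 = y2) (con13 : x1 = x3 ∨ y1 = y3) (con23 : x2 = x3 ∨ y2 = y3)
    (dis12 : ¬ (x1 = x2 ∧ y1 = y2)) (dis13 : ¬ (x1 = x3 ∧ y1 = y3))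
    (dis23 : ¬ (x2 = x3 ∧ y2 = y3)) : False := by
  have keyx : ∀ u v : ℕ, u = p ∨ u = q → v = p ∨ v = q →
      (u = v ↔ decide (u = p) = decide (v = p)) := by
    rintro u v (rfl | rfl) (rfl | rfl) <;> simp [hpq, Ne.symm hpq]
  have keyy : ∀ u v : ℕ, u = r ∨ u = s → v = r ∨ v = s →
      (u = v ↔ decide (u = r) = decide (v = r)) := by
    rintro u v (rfl | rfl) (rfl | rfl) <;> simp [hrs, Ne.symm hrs]
  rw [keyx x1 x2 hX1 hX2, keyy y1 y2 hY1 hY2] at con12 dis12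
  rw [keyx x1 x3 hX1 hX3, keyy y1 y3 hY1 hY3] at con13 dis13
  rw [keyx x2 x3 hX2 hX3, keyy y2 y3 hY2 hY3] at con23 dis23
  exact grid_bool _ _ _ _ _ _ con12 con13 con23 dis12 dis13 dis23

/-- for `n ≥ 5`, the complete graph `K_n` minus one edge is not JIS. -/
theorem complete_minus_edge_not_isJIS (n : ℕ) (hn : 5 ≤ n) (a b : Fin n) (hab : a ≠ b) :
    ¬ IsJIS ((⊤ : SimpleGraph (Fin n)).deleteEdges {s(a, b)}) := by
  rintro ⟨m, hm, S, hinj, hcard, hadj⟩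
  set G := (⊤ : SimpleGraph (Fin n)).deleteEdges {s(a, b)} with hG
  -- a and b are not adjacent
  have hnadj : ¬ G.Adj a b := by
    rw [hG, SimpleGraph.deleteEdges_adj]
    exact fun h => h.2 rfl
  have hABne : (S a ∩ S b).card ≠ m - 1 := fun h => hnadj ((hadj a b hab).mpr h)
  have hSab : S a ≠ S b := fun h => hab (hinj h)
  have hABlt : (S a ∩ S b).card < m := by
    have hsub : S a ∩ S b ⊆ S a := Finset.inter_subset_left
    have hle : (S a ∩ S b).card ≤ m := hcard a ▸ Finset.card_le_card hsub
    rcases lt_or_eq_of_le hle with h | h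
    · exact h
    · exfalso
      have hca := hcard a
      have h1 : S a ∩ S b = S a := Finset.eq_of_subset_of_card_le hsub (by omega)
      have h2 : S a ⊆ S b := h1 ▸ Finset.inter_subset_right
      exact hSab (Finset.eq_of_subset_of_card_le h2 (by rw [hcard a, hcard b]))
  have hAB2 : (S a ∩ S b).card + 2 ≤ m := by omega
  -- find three vertices distinct from a and b
  have hcard3 : 3 ≤ (({a, b} : Finset (Fin n))ᶜ).card := by
    have h1 : (({a, b} : Finset (Fin n))).card ≤ 2 := Finset.card_insert_le _ _
    have h2 := Finset.card_compl ({a, b} : Finset (Fin n))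
    rw [Fintype.card_fin] at h2
    omega
  obtain ⟨c, hc⟩ := Finset.card_pos.mp (by omega : 0 < (({a, b} : Finset (Fin n))ᶜ).card)
  obtain ⟨d, hd⟩ := Finset.card_pos.mp (by
    rw [Finset.card_erase_of_mem hc]; omega : 0 < ((({a, b} : Finset (Fin n))ᶜ).erase c).card)
  obtain ⟨e, he⟩ := Finset.card_pos.mp (by
    rw [Finset.card_erase_of_mem hd, Finset.card_erase_of_mem hc]; omega :
      0 < (((({a, b} : Finset (Fin n))ᶜ).erase c).erase d).card)
  rw [Finset.mem_erase] at hd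
  rw [Finset.mem_erase, Finset.mem_erase] at he
  have hde : e ≠ d := he.1
  have hce : e ≠ c := he.2.1
  have hcd : d ≠ c := hd.1
  have hmem : ∀ v : Fin n, v ∈ ({a, b} : Finset (Fin n))ᶜ → v ≠ a ∧ v ≠ b := by
    intro v hv
    simp only [Finset.mem_compl, Finset.mem_insert, Finset.mem_singleton] at hv
    push_neg at hv
    exact hv
  have hc' := hmem c hc
  have hd' := hmem d hd.2
  have he' := hmem e he.2.2
  -- each of c, d, e is adjacent to both a and b
  have hAdj : ∀ v w : Fin n, v ≠ w → s(v, w) ≠ s(a, b) → G.Adj v w := by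
    intro v w h1 h2
    rw [hG, SimpleGraph.deleteEdges_adj]
    exact ⟨(SimpleGraph.top_adj v w).mpr h1, by simpa using h2⟩
  have hadjvw : ∀ v w : Fin n, v ≠ w → v ≠ a → v ≠ b → w ≠ a → w ≠ b →
      (S v ∩ S w).card = m - 1 := by
    intro v w hvw hva hvb hwa hwb
    refine (hadj v w hvw).mp (hAdj v w hvw ?_)
    rw [Ne, Sym2.eq_iff]
    push_neg
    exact ⟨fun h => absurd h hva, fun h => absurd h hvb⟩
  have hadjab : ∀ v : Fin n, v ≠ a → v ≠ b →
      (S a ∩ S v).card = m - 1 ∧ (S b ∩ S v).card = m - 1 := by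
    intro v hva hvb
    constructor
    · refine (hadj a v (Ne.symm hva)).mp (hAdj a v (Ne.symm hva) ?_)
      rw [Ne, Sym2.eq_iff]
      push_neg
      exact ⟨fun _ => hvb, fun _ => hva⟩
    · refine (hadj b v (Ne.symm hvb)).mp (hAdj b v (Ne.symm hvb) ?_)
      rw [Ne, Sym2.eq_iff]
      push_neg
      exact ⟨fun h => absurd h.symm hab, fun _ => hva⟩
  have hm2 : 2 ≤ m := by omega
  obtain ⟨x1, y1, hx1A, hx1B, hy1B, hy1A, hC1, hABeq⟩ :=
    jis_aux (S a) (S b) (S c) (hcard a) (hcard b) (hcard c) hAB2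
      (hadjab c hc'.1 hc'.2).1 (hadjab c hc'.1 hc'.2).2
  obtain ⟨x2, y2, hx2A, hx2B, hy2B, hy2A, hC2, -⟩ :=
    jis_aux (S a) (S b) (S d) (hcard a) (hcard b) (hcard d) hAB2
      (hadjab d hd'.1 hd'.2).1 (hadjab d hd'.1 hd'.2).2
  obtain ⟨x3, y3, hx3A, hx3B, hy3B, hy3A, hC3, -⟩ :=
    jis_aux (S a) (S b) (S e) (hcard a) (hcard b) (hcard e) hAB2
      (hadjab e he'.1 he'.2).1 (hadjab e he'.1 he'.2).2
  -- adjacency constraints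
  have con12 : x1 = x2 ∨ y1 = y2 := by
    by_contra hcon
    push_neg at hcon
    exact jis_aux2 (S a) (S c) (S d) x1 y1 x2 y2 (hcard a) hm2 hx1A hx2A hy1A hy2A hC1 hC2
      hcon.1 hcon.2 (hadjvw c d (Ne.symm hcd) hc'.1 hc'.2 hd'.1 hd'.2)
  have con13 : x1 = x3 ∨ y1 = y3 := by
    by_contra hcon
    push_neg at hcon
    exact jis_aux2 (S a) (S c) (S e) x1 y1 x3 y3 (hcard a) hm2 hx1A hx3A hy1A hy3A hC1 hC3
      hcon.1 hcon.2 (hadjvw c e (Ne.symm hce) hc'.1 hc'.2 he'.1 he'.2)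
  have con23 : x2 = x3 ∨ y2 = y3 := by
    by_contra hcon
    push_neg at hcon
    exact jis_aux2 (S a) (S d) (S e) x2 y2 x3 y3 (hcard a) hm2 hx2A hx3A hy2A hy3A hC2 hC3
      hcon.1 hcon.2 (hadjvw d e (Ne.symm hde) hd'.1 hd'.2 he'.1 he'.2)
  -- distinctness constraints
  have dis12 : ¬ (x1 = x2 ∧ y1 = y2) := by
    rintro ⟨h1, h2⟩
    exact (Ne.symm hcd) (hinj (by rw [hC1, hC2, h1, h2]))
  have dis13 : ¬ (x1 = x3 ∧ y1 = y3) := by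
    rintro ⟨h1, h2⟩
    exact (Ne.symm hce) (hinj (by rw [hC1, hC3, h1, h2]))
  have dis23 : ¬ (x2 = x3 ∧ y2 = y3) := by
    rintro ⟨h1, h2⟩
    exact (Ne.symm hde) (hinj (by rw [hC2, hC3, h1, h2]))
  -- the sets S a \ S b and S b \ S a have exactly two elements
  have hsd1 : (S a \ S b).card = 2 := by
    have := Finset.card_sdiff_add_card_inter (S a) (S b)
    rw [hcard a] at this
    omega
  have hsd2 : (S b \ S a).card = 2 := by
    have := Finset.card_sdiff_add_card_inter (S b) (S a)
    rw [hcard b, Finset.inter_comm] at this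
    omega
  obtain ⟨p, q, hpq, hABset⟩ := Finset.card_eq_two.mp hsd1
  obtain ⟨r, s, hrs, hBAset⟩ := Finset.card_eq_two.mp hsd2
  have hmemx : ∀ x : ℕ, x ∈ S a → x ∉ S b → x = p ∨ x = q := by
    intro x h1 h2
    have : x ∈ S a \ S b := Finset.mem_sdiff.mpr ⟨h1, h2⟩
    rw [hABset] at this
    simpa using this
  have hmemy : ∀ y : ℕ, y ∈ S b → y ∉ S a → y = r ∨ y = s := by
    intro y h1 h2
    have : y ∈ S b \ S a := Finset.mem_sdiff.mpr ⟨h1, h2⟩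
    rw [hBAset] at this
    simpa using this
  have hX1 := hmemx x1 hx1A hx1B
  have hX2 := hmemx x2 hx2A hx2B
  have hX3 := hmemx x3 hx3A hx3B
  have hY1 := hmemy y1 hy1B hy1A
  have hY2 := hmemy y2 hy2B hy2A
  have hY3 := hmemy y3 hy3B hy3A
  exact grid_lemma p q r s x1 x2 x3 y1 y2 y3 hpq hrs hX1 hX2 hX3 hY1 hY2 hY3
    con12 con13 con23 dis12 dis13 dis23
end

section
/- Every JIS graph is an edge move distance graph: if G is a finite JIS graph, then there exists a family (Q_v), indexed by the vertices v of G, of finite simple graphs on a common finite vertex set, all with the same number of edges and pairwise non-isomorphic, such that for all distinct vertices v and w of G: v is adjacent to w in G if and only if there exist an edge e of Q_v and a non-edge f of Q_v such that the graph obtained from Q_v by deleting e and adding f is isomorphic to Q_w (i.e., d_m(Q_v, Q_w) = 1). -/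
open Finset
set_option linter.unusedSectionVars false
namespace JIS19

def lim (A : Finset ℕ) (j : ℕ) : ℕ := 5*j + 4 + (if j ∈ A then 1 else 0)

lemma lim_lb (A : Finset ℕ) (j : ℕ) : 5*j+4 ≤ lim A j := by unfold lim; split <;> omega
lemma lim_ub (A : Finset ℕ) (j : ℕ) : lim A j ≤ 5*j+5 := by unfold lim; split <;> omega

def BG (M : ℕ) (A : Finset ℕ) : SimpleGraph (Fin M × Fin (5*M+1)) where
  Adj x y := (x.1 : ℕ) = y.1 ∧
    (((x.2 : ℕ) = 0 ∧ (y.2 : ℕ) ≠ 0 ∧ (y.2 : ℕ) ≤ lim A x.1) ∨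
     ((y.2 : ℕ) = 0 ∧ (x.2 : ℕ) ≠ 0 ∧ (x.2 : ℕ) ≤ lim A x.1))
  symm := by
    constructor
    rintro x y ⟨h1, h2⟩
    refine ⟨h1.symm, ?_⟩
    rw [show (y.1 : ℕ) = (x.1 : ℕ) from h1.symm] at *
    tauto
  loopless := by constructor; rintro x ⟨-, h | h⟩ <;> tauto

instance (M : ℕ) (A : Finset ℕ) : DecidableRel (BG M A).Adj := by
  unfold BG; intro x y; dsimp only; infer_instance

lemma bg_adj {M : ℕ} {A : Finset ℕ} {x y : Fin M × Fin (5*M+1)} :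
    (BG M A).Adj x y ↔ (x.1 : ℕ) = y.1 ∧
    (((x.2 : ℕ) = 0 ∧ (y.2 : ℕ) ≠ 0 ∧ (y.2 : ℕ) ≤ lim A x.1) ∨
     ((y.2 : ℕ) = 0 ∧ (x.2 : ℕ) ≠ 0 ∧ (x.2 : ℕ) ≤ lim A x.1)) := Iff.rfl

lemma card_filter_le (K L : ℕ) (h : L < K) :
    ((univ : Finset (Fin K)).filter fun t : Fin _ => (t:ℕ) ≠ 0 ∧ (t:ℕ) ≤ L).card = L := by
  have key : ((univ : Finset (Fin K)).filter fun t : Fin _ => (t:ℕ) ≠ 0 ∧ (t:ℕ) ≤ L).card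
      = (Finset.Ioc 0 L).card := by
    apply Finset.card_bij (fun (t : Fin K) _ => (t : ℕ))
    · intro a ha; simp only [mem_filter, mem_univ, true_and] at ha
      simp only [mem_Ioc]; omega
    · intro a _ b _ hab; exact Fin.val_injective hab
    · intro m hm; simp only [mem_Ioc] at hm
      refine ⟨⟨m, by omega⟩, ?_, rfl⟩
      simp only [mem_filter, mem_univ, true_and]; omega
  rw [key]; simp

lemma nbr_center (M : ℕ) (A : Finset ℕ) (j : Fin M) :
    (BG M A).neighborFinset (j, (0 : Fin (5*M+1))) =
      ((univ : Finset (Fin (5*M+1))).filter fun t : Fin _ => (t:ℕ) ≠ 0 ∧ (t:ℕ) ≤ lim A j).image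
        (fun t => (j, t)) := by
  ext z
  simp only [SimpleGraph.mem_neighborFinset, bg_adj, mem_image, mem_filter, mem_univ, true_and]
  constructor
  · rintro ⟨h1, h2 | h2⟩
    · exact ⟨z.2, ⟨h2.2.1, h2.2.2⟩, Prod.ext (Fin.val_injective h1) rfl⟩
    · simp at h2
  · rintro ⟨t, ⟨ht1, ht2⟩, rfl⟩
    exact ⟨rfl, Or.inl ⟨rfl, ht1, ht2⟩⟩

lemma deg_center (M : ℕ) (A : Finset ℕ) (j : Fin M) :
    (BG M A).degree (j, (0 : Fin (5*M+1))) = lim A j := by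
  rw [SimpleGraph.degree, nbr_center, Finset.card_image_of_injective _
    (fun a b hab => (Prod.ext_iff.mp hab).2), card_filter_le]
  have := lim_ub A j
  have := j.isLt
  omega

lemma nbr_leaf (M : ℕ) (A : Finset ℕ) (u : Fin M × Fin (5*M+1)) (hu : (u.2:ℕ) ≠ 0) :
    (BG M A).neighborFinset u ⊆ {(u.1, (0 : Fin (5*M+1)))} := by
  intro z hz
  simp only [SimpleGraph.mem_neighborFinset, bg_adj] at hz
  obtain ⟨h1, h2 | h2⟩ := hz
  · exact absurd h2.1 hu
  · simp only [mem_singleton]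
    exact Prod.ext (Fin.val_injective h1).symm (Fin.val_injective (by simpa using h2.1))

lemma deg_leaf_le (M : ℕ) (A : Finset ℕ) (u : Fin M × Fin (5*M+1)) (hu : (u.2:ℕ) ≠ 0) :
    (BG M A).degree u ≤ 1 := by
  have := Finset.card_le_card (nbr_leaf M A u hu)
  simpa using this

lemma deg_leaf_eq (M : ℕ) (A : Finset ℕ) (j : Fin M) (t : Fin (5*M+1)) (ht : (t:ℕ) ≠ 0) :
    (BG M A).degree (j, t) = if (t:ℕ) ≤ lim A j then 1 else 0 := by
  by_cases h : (t:ℕ) ≤ lim A j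
  · rw [if_pos h, SimpleGraph.degree,
      show (BG M A).neighborFinset (j, t) = {(j, (0 : Fin (5*M+1)))} from ?_]
    · simp
    · apply Finset.Subset.antisymm (nbr_leaf M A (j,t) ht)
      intro z hz
      simp only [mem_singleton] at hz
      subst hz
      rw [SimpleGraph.mem_neighborFinset, bg_adj]
      exact ⟨rfl, Or.inr ⟨rfl, ht, h⟩⟩
  · rw [if_neg h, SimpleGraph.degree, Finset.card_eq_zero,
      Finset.eq_empty_iff_forall_notMem]
    intro z hz
    simp only [SimpleGraph.mem_neighborFinset, bg_adj] at hz
    obtain ⟨h1, h2 | h2⟩ := hz <;> tauto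



section move
variable {V : Type*} [Fintype V] [DecidableEq V] (G : SimpleGraph V) [DecidableRel G.Adj]
  (x y p q : V)

lemma move_adj (hpq : p ≠ q) (u z : V) :
    ((G.deleteEdges {s(x,y)} ⊔ SimpleGraph.fromEdgeSet {s(p,q)}).Adj u z) ↔
      (G.Adj u z ∧ s(u,z) ≠ s(x,y)) ∨ s(u,z) = s(p,q) := by
  simp only [SimpleGraph.sup_adj, SimpleGraph.deleteEdges_adj, Set.mem_singleton_iff,
    SimpleGraph.fromEdgeSet_adj]
  constructor
  · rintro (⟨h1, h2⟩ | ⟨h1, h2⟩)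
    · exact Or.inl ⟨h1, h2⟩
    · exact Or.inr h1
  · rintro (⟨h1, h2⟩ | h1)
    · exact Or.inl ⟨h1, h2⟩
    · refine Or.inr ⟨h1, ?_⟩
      rw [Sym2.eq_iff] at h1
      rintro rfl
      rcases h1 with ⟨rfl, rfl⟩ | ⟨rfl, rfl⟩ <;> exact hpq rfl

variable [DecidableRel (G.deleteEdges {s(x,y)} ⊔ SimpleGraph.fromEdgeSet {s(p,q)}).Adj]

lemma move_deg_le (hpq : p ≠ q) (u : V) :
    (G.deleteEdges {s(x,y)} ⊔ SimpleGraph.fromEdgeSet {s(p,q)}).degree u ≤ G.degree u + 2 := by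
  have hsub : (G.deleteEdges {s(x,y)} ⊔ SimpleGraph.fromEdgeSet {s(p,q)}).neighborFinset u ⊆
      insert p (insert q (G.neighborFinset u)) := by
    intro z hz
    rw [SimpleGraph.mem_neighborFinset, move_adj G x y p q hpq] at hz
    simp only [mem_insert, SimpleGraph.mem_neighborFinset]
    rcases hz with ⟨h1, -⟩ | h1
    · tauto
    · rw [Sym2.eq_iff] at h1
      rcases h1 with ⟨rfl, rfl⟩ | ⟨rfl, rfl⟩ <;> tauto
  calc _ ≤ (insert p (insert q (G.neighborFinset u))).card := Finset.card_le_card hsub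
    _ ≤ (insert q (G.neighborFinset u)).card + 1 := Finset.card_insert_le _ _
    _ ≤ G.degree u + 2 := by
        have := Finset.card_insert_le q (G.neighborFinset u)
        unfold SimpleGraph.degree; omega

lemma move_deg_ge (hpq : p ≠ q) (u : V) :
    G.degree u ≤ (G.deleteEdges {s(x,y)} ⊔ SimpleGraph.fromEdgeSet {s(p,q)}).degree u + 1 := by
  have hsub : G.neighborFinset u ⊆
      insert (if u = x then y else x)
        ((G.deleteEdges {s(x,y)} ⊔ SimpleGraph.fromEdgeSet {s(p,q)}).neighborFinset u) := by
    intro z hz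
    rw [SimpleGraph.mem_neighborFinset] at hz
    simp only [mem_insert, SimpleGraph.mem_neighborFinset, move_adj G x y p q hpq]
    by_cases he : s(u,z) = s(x,y)
    · rw [Sym2.eq_iff] at he
      rcases he with ⟨rfl, rfl⟩ | ⟨rfl, rfl⟩
      · simp
      · left
        split
        · next h => exact (G.ne_of_adj hz (h.symm ▸ rfl)).elim
        · rfl
    · exact Or.inr (Or.inl ⟨hz, he⟩)
  have := Finset.card_le_card hsub
  have := Finset.card_insert_le (if u = x then y else x)
    ((G.deleteEdges {s(x,y)} ⊔ SimpleGraph.fromEdgeSet {s(p,q)}).neighborFinset u)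
  unfold SimpleGraph.degree; omega

lemma move_deg_mono_f (hpq : p ≠ q) (u : V) (hup : u ≠ p) (huq : u ≠ q) :
    (G.deleteEdges {s(x,y)} ⊔ SimpleGraph.fromEdgeSet {s(p,q)}).degree u ≤ G.degree u := by
  apply Finset.card_le_card
  intro z hz
  rw [SimpleGraph.mem_neighborFinset, move_adj G x y p q hpq] at hz
  rw [SimpleGraph.mem_neighborFinset]
  rcases hz with ⟨h1, -⟩ | h1
  · exact h1
  · rw [Sym2.eq_iff] at h1
    rcases h1 with ⟨rfl, rfl⟩ | ⟨rfl, rfl⟩ <;> tauto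

lemma move_deg_mono_e (hpq : p ≠ q) (u : V) (hux : u ≠ x) (huy : u ≠ y) :
    G.degree u ≤ (G.deleteEdges {s(x,y)} ⊔ SimpleGraph.fromEdgeSet {s(p,q)}).degree u := by
  apply Finset.card_le_card
  intro z hz
  rw [SimpleGraph.mem_neighborFinset] at hz
  rw [SimpleGraph.mem_neighborFinset, move_adj G x y p q hpq]
  refine Or.inl ⟨hz, fun h => ?_⟩
  rw [Sym2.eq_iff] at h
  rcases h with ⟨rfl, rfl⟩ | ⟨rfl, rfl⟩ <;> tauto

end move

lemma iso_degree {V W : Type*} [Fintype V] [Fintype W] {G : SimpleGraph V} {H : SimpleGraph W}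
    [DecidableRel G.Adj] [DecidableRel H.Adj] (φ : G ≃g H) (v : V) :
    H.degree (φ v) = G.degree v := by
  rw [← SimpleGraph.card_neighborSet_eq_degree, ← SimpleGraph.card_neighborSet_eq_degree]
  exact (Fintype.card_congr (φ.mapNeighborSet v)).symm


lemma pin {M : ℕ} (B : Finset ℕ) (H : SimpleGraph (Fin M × Fin (5*M+1)))
    [DecidableRel H.Adj]
    (hleaf : ∀ u : Fin M × Fin (5*M+1), (u.2:ℕ) ≠ 0 → H.degree u ≤ 3)
    (hcent : ∀ i : Fin M, 5*(i:ℕ)+3 ≤ H.degree (i, (0:Fin (5*M+1))) ∧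
      H.degree (i, (0:Fin (5*M+1))) ≤ 5*(i:ℕ)+7)
    (φ : H ≃g BG M B) (j : Fin M) :
    H.degree (j, (0:Fin (5*M+1))) = lim B j := by
  set u := φ.symm (j, (0:Fin (5*M+1))) with hu
  have hd : H.degree u = lim B j := by
    have := iso_degree φ u
    rw [hu, RelIso.apply_symm_apply] at this
    rw [← this, deg_center]
  have hu2 : (u.2:ℕ) = 0 := by
    by_contra h
    have h1 := hleaf u h
    have h2 := lim_lb B j
    omega
  have hue : u = (u.1, (0:Fin (5*M+1))) := by
    refine Prod.ext rfl (Fin.val_injective ?_)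
    simpa using hu2
  rw [hue] at hd
  obtain ⟨hc1, hc2⟩ := hcent u.1
  rw [hd] at hc1 hc2
  have h2 := lim_lb B j
  have h3 := lim_ub B j
  have : (u.1 : ℕ) = (j : ℕ) := by omega
  have h4 : u.1 = j := Fin.val_injective this
  rw [h4] at hd
  exact hd


lemma card_filter_lt (K L : ℕ) (h : L ≤ K) :
    ((univ : Finset (Fin K)).filter fun t : Fin _ => (t:ℕ) < L).card = L := by
  have key : ((univ : Finset (Fin K)).filter fun t : Fin _ => (t:ℕ) < L).card
      = (Finset.range L).card := by
    apply Finset.card_bij (fun (t : Fin K) _ => (t : ℕ))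
    · intro a ha; simp only [mem_filter, mem_univ, true_and] at ha
      simp only [mem_range]; omega
    · intro a _ b _ hab; exact Fin.val_injective hab
    · intro m hm; simp only [mem_range] at hm
      refine ⟨⟨m, by omega⟩, ?_, rfl⟩
      simp only [mem_filter, mem_univ, true_and]; omega
  rw [key, Finset.card_range]

lemma sum_deg (M : ℕ) (A : Finset ℕ) (hA : A ⊆ Finset.range M) :
    ∑ u : Fin M × Fin (5*M+1), (BG M A).degree u
      = (∑ j ∈ Finset.range M, 2*(5*j+4)) + 2*A.card := by
  rw [Fintype.sum_prod_type]
  have inner : ∀ j : Fin M, ∑ t : Fin (5*M+1), (BG M A).degree (j, t) = 2 * lim A (j:ℕ) := by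
    intro j
    rw [Fin.sum_univ_succ, deg_center M A j]
    have hsucc : ∀ i : Fin (5*M), (BG M A).degree (j, i.succ)
        = if ((i:ℕ) < lim A j) then 1 else 0 := by
      intro i
      rw [deg_leaf_eq M A j i.succ (by simp [Fin.val_succ])]
      simp only [Fin.val_succ, Nat.add_one_le_iff]
    rw [Finset.sum_congr rfl (fun i _ => hsucc i), Finset.sum_boole]
    have hL : lim A (j:ℕ) ≤ 5*M := by
      have := lim_ub A j
      have := j.isLt
      omega
    rw [show ((univ : Finset (Fin (5*M))).filter fun i : Fin _ => (i:ℕ) < lim A (j:ℕ))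
      = ((univ : Finset (Fin (5*M))).filter fun t : Fin _ => (t:ℕ) < lim A (j:ℕ)) from rfl]
    rw [card_filter_lt (5*M) (lim A (j:ℕ)) hL]
    simp [two_mul]
  rw [Finset.sum_congr rfl (fun j _ => inner j),
    Fin.sum_univ_eq_sum_range (fun j => 2 * lim A j) M]
  have : ∀ j ∈ Finset.range M, 2 * lim A j = 2*(5*j+4) + 2*(if j ∈ A then 1 else 0) := by
    intro j _
    unfold lim
    ring
  rw [Finset.sum_congr rfl this, Finset.sum_add_distrib]
  have h2 : ∑ x ∈ Finset.range M, (2 * if x ∈ A then 1 else 0) = 2 * A.card := by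
    rw [← Finset.mul_sum, Finset.sum_boole, Finset.filter_mem_eq_inter,
      Finset.inter_eq_right.mpr hA]
    simp
  rw [h2]

lemma ncard_edgeSet (M : ℕ) (A : Finset ℕ) :
    (BG M A).edgeSet.ncard = (BG M A).edgeFinset.card := by
  rw [← SimpleGraph.coe_edgeFinset, Set.ncard_coe_finset]

lemma edge_count_eq (M : ℕ) (A B : Finset ℕ) (hA : A ⊆ Finset.range M)
    (hB : B ⊆ Finset.range M) (hcard : A.card = B.card) :
    (BG M A).edgeSet.ncard = (BG M B).edgeSet.ncard := by
  rw [ncard_edgeSet, ncard_edgeSet]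
  have h1 := SimpleGraph.sum_degrees_eq_twice_card_edges (BG M A)
  have h2 := SimpleGraph.sum_degrees_eq_twice_card_edges (BG M B)
  rw [sum_deg M A hA] at h1
  rw [sum_deg M B hB] at h2
  omega


lemma lim_mem {A : Finset ℕ} {m : ℕ} (h : m ∈ A) : lim A m = 5*m+5 := by
  simp [lim, h]

lemma lim_not_mem {A : Finset ℕ} {m : ℕ} (h : m ∉ A) : lim A m = 5*m+4 := by
  simp [lim, h]

lemma mem_iff_of_lim_eq {A B : Finset ℕ} {m : ℕ} (h : lim A m = lim B m) :
    (m ∈ A ↔ m ∈ B) := by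
  by_cases h1 : m ∈ A <;> by_cases h2 : m ∈ B
  · exact iff_of_true h1 h2
  · rw [lim_mem h1, lim_not_mem h2] at h; omega
  · rw [lim_not_mem h1, lim_mem h2] at h; omega
  · exact iff_of_false h1 h2

lemma bg_not_iso (M : ℕ) (A B : Finset ℕ) (hA : A ⊆ Finset.range M)
    (hB : B ⊆ Finset.range M) (hAB : A ≠ B) : ¬ Nonempty (BG M A ≃g BG M B) := by
  rintro ⟨φ⟩
  have hpin : ∀ j : Fin M, lim A (j:ℕ) = lim B (j:ℕ) := by
    intro j
    have h := pin B (BG M A)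
      (fun u hu => le_trans (deg_leaf_le M A u hu) (by norm_num))
      (fun i => by
        rw [deg_center]
        have := lim_lb A (i:ℕ)
        have := lim_ub A (i:ℕ)
        omega) φ j
    rw [deg_center] at h
    exact h
  apply hAB
  ext m
  by_cases hm : m < M
  · exact mem_iff_of_lim_eq (hpin ⟨m, hm⟩)
  · constructor <;> intro h
    · exact absurd (Finset.mem_range.mp (hA h)) hm
    · exact absurd (Finset.mem_range.mp (hB h)) hm


lemma converse {M n : ℕ} (A B : Finset ℕ) (hA : A ⊆ Finset.range M)
    (hB : B ⊆ Finset.range M) (hcA : A.card = n) (hcB : B.card = n) (hAB : A ≠ B)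
    (e f : Sym2 (Fin M × Fin (5*M+1))) (he : e ∈ (BG M A).edgeSet)
    (hf : f ∉ (BG M A).edgeSet) (hfd : ¬ f.IsDiag)
    (hiso : Nonempty (((BG M A).deleteEdges {e} ⊔ SimpleGraph.fromEdgeSet {f}) ≃g BG M B)) :
    (A ∩ B).card = n - 1 := by
  obtain ⟨x, y, rfl⟩ : ∃ x y, e = s(x,y) := by
    induction e using Sym2.ind with
    | _ a b => exact ⟨a, b, rfl⟩
  obtain ⟨p, q, rfl⟩ : ∃ p q, f = s(p,q) := by
    induction f using Sym2.ind with
    | _ a b => exact ⟨a, b, rfl⟩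
  rw [SimpleGraph.mem_edgeSet] at he
  have hpq : p ≠ q := fun h => hfd (Sym2.mk_isDiag_iff.mpr h)
  obtain ⟨φ⟩ := hiso
  haveI : DecidableRel ((BG M A).deleteEdges {s(x,y)} ⊔
      SimpleGraph.fromEdgeSet {s(p,q)}).Adj := Classical.decRel _
  have hpin : ∀ j : Fin M,
      ((BG M A).deleteEdges {s(x,y)} ⊔ SimpleGraph.fromEdgeSet {s(p,q)}).degree
        (j, (0:Fin (5*M+1))) = lim B (j:ℕ) := by
    apply pin
    · intro u hu
      have h1 := move_deg_le (BG M A) x y p q hpq u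
      have h2 := deg_leaf_le M A u hu
      omega
    · intro i
      have h1 := move_deg_le (BG M A) x y p q hpq (i, (0:Fin (5*M+1)))
      have h2 := move_deg_ge (BG M A) x y p q hpq (i, (0:Fin (5*M+1)))
      rw [deg_center] at h1 h2
      have := lim_lb A (i:ℕ)
      have := lim_ub A (i:ℕ)
      omega
    · exact φ
  -- every element of A \ B equals (x.1 : ℕ)
  have hsub : A \ B ⊆ {(x.1 : ℕ)} := by
    intro m hm
    rw [Finset.mem_sdiff] at hm
    obtain ⟨hmA, hmB⟩ := hm
    have hmM : m < M := Finset.mem_range.mp (hA hmA)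
    set jF : Fin M := ⟨m, hmM⟩
    have hdR := hpin jF
    have hlt : ((BG M A).deleteEdges {s(x,y)} ⊔ SimpleGraph.fromEdgeSet {s(p,q)}).degree
        (jF, (0:Fin (5*M+1))) < (BG M A).degree (jF, (0:Fin (5*M+1))) := by
      rw [hdR, deg_center, lim_mem (show (jF:ℕ) ∈ A from hmA),
        lim_not_mem (show (jF:ℕ) ∉ B from hmB)]
      omega
    have hce : (jF, (0:Fin (5*M+1))) = x ∨ (jF, (0:Fin (5*M+1))) = y := by
      by_contra hc
      push_neg at hc
      exact absurd (move_deg_mono_e (BG M A) x y p q hpq _ hc.1 hc.2) (by omega)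
    have hxy1 : (x.1 : ℕ) = (y.1 : ℕ) := he.1
    rw [Finset.mem_singleton]
    rcases hce with h | h
    · rw [← h]
    · rw [hxy1, ← h]
  have h1 : (A \ B).card ≤ 1 := le_trans (Finset.card_le_card hsub) (by simp)
  have h2 : (A \ B).card ≠ 0 := by
    intro h0
    rw [Finset.card_eq_zero, Finset.sdiff_eq_empty_iff_subset] at h0
    exact hAB (Finset.eq_of_subset_of_card_le h0 (by omega))
  have h3 := Finset.card_inter_add_card_sdiff A B
  omega


set_option maxHeartbeats 2000000 in
lemma forward {M n : ℕ} (A B : Finset ℕ) (hA : A ⊆ Finset.range M)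
    (hB : B ⊆ Finset.range M) (hcA : A.card = n) (hcB : B.card = n) (hn : 0 < n)
    (hint : (A ∩ B).card = n - 1) :
    ∃ e f : Sym2 (Fin M × Fin (5*M+1)), e ∈ (BG M A).edgeSet ∧ f ∉ (BG M A).edgeSet ∧
      ¬ f.IsDiag ∧
      Nonempty (((BG M A).deleteEdges {e} ⊔ SimpleGraph.fromEdgeSet {f}) ≃g BG M B) := by
  have hiAB := Finset.card_inter_add_card_sdiff A B
  have hiBA := Finset.card_inter_add_card_sdiff B A
  rw [Finset.inter_comm] at hiBA
  have hcardAB : (A \ B).card = 1 := by omega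
  have hcardBA : (B \ A).card = 1 := by omega
  obtain ⟨a, ha⟩ := Finset.card_eq_one.mp hcardAB
  obtain ⟨b, hb⟩ := Finset.card_eq_one.mp hcardBA
  have haAB : a ∈ A \ B := by rw [ha]; exact Finset.mem_singleton_self a
  have hbBA : b ∈ B \ A := by rw [hb]; exact Finset.mem_singleton_self b
  rw [Finset.mem_sdiff] at haAB hbBA
  obtain ⟨haA, haB⟩ := haAB
  obtain ⟨hbB, hbA⟩ := hbBA
  have hab : a ≠ b := fun h => hbA (h ▸ haA)
  have haM : a < M := Finset.mem_range.mp (hA haA)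
  have hbM : b < M := Finset.mem_range.mp (hB hbB)
  have hmemB : ∀ m : ℕ, (m ∈ B ↔ ((m ∈ A ∧ m ≠ a) ∨ m = b)) := by
    intro m
    constructor
    · intro hmB
      by_cases hmb : m = b
      · exact Or.inr hmb
      · have : m ∉ B \ A := by rw [hb, Finset.mem_singleton]; exact hmb
        rw [Finset.mem_sdiff] at this
        push_neg at this
        exact Or.inl ⟨this hmB, fun hma => haB (hma ▸ hmB)⟩
    · rintro (⟨hmA, hma⟩ | rfl)
      · have : m ∉ A \ B := by rw [ha, Finset.mem_singleton]; exact hma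
        rw [Finset.mem_sdiff] at this
        push_neg at this
        exact this hmA
      · exact hbB
  set ca : Fin M × Fin (5*M+1) := (⟨a, haM⟩, ⟨0, by omega⟩) with hca
  set la : Fin M × Fin (5*M+1) := (⟨a, haM⟩, ⟨5*a+5, by omega⟩) with hla
  set cb : Fin M × Fin (5*M+1) := (⟨b, hbM⟩, ⟨0, by omega⟩) with hcb
  set lb : Fin M × Fin (5*M+1) := (⟨b, hbM⟩, ⟨5*b+5, by omega⟩) with hlb
  have hpq : cb ≠ lb := by
    intro h
    have := congrArg (fun z => (z.2 : ℕ)) h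
    simp [hcb, hlb] at this
  refine ⟨s(ca, la), s(cb, lb), ?_, ?_, ?_, ?_⟩
  · rw [SimpleGraph.mem_edgeSet, bg_adj]
    refine ⟨rfl, Or.inl ⟨rfl, by simp [hla], ?_⟩⟩
    rw [show ((ca.1 : ℕ)) = a from rfl, lim_mem haA]
  · rw [SimpleGraph.mem_edgeSet, bg_adj]
    rintro ⟨-, ⟨-, -, h3⟩ | ⟨h1, -, -⟩⟩
    · rw [show ((cb.1 : ℕ)) = b from rfl, lim_not_mem hbA] at h3
      simp [hlb] at h3
    · simp [hlb] at h1
  · rw [Sym2.mk_isDiag_iff]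
    exact hpq
  · have Heq : ((BG M A).deleteEdges {s(ca, la)} ⊔ SimpleGraph.fromEdgeSet {s(cb, lb)})
        = BG M B := by
      ext u z
      rw [move_adj (BG M A) ca la cb lb hpq]
      obtain ⟨u1, u2⟩ := u
      obtain ⟨z1, z2⟩ := z
      simp only [bg_adj, ne_eq, Sym2.eq_iff, Prod.ext_iff, Fin.ext_iff, hca, hla, hcb, hlb]
      by_cases h1 : (u1 : ℕ) = a
      · have eA : lim A (u1 : ℕ) = 5*(u1:ℕ)+5 := by rw [h1]; exact lim_mem haA
        have eB : lim B (u1 : ℕ) = 5*(u1:ℕ)+4 := by rw [h1]; exact lim_not_mem haB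
        rw [eA, eB]
        omega
      · by_cases h2 : (u1 : ℕ) = b
        · have eA : lim A (u1 : ℕ) = 5*(u1:ℕ)+4 := by rw [h2]; exact lim_not_mem hbA
          have eB : lim B (u1 : ℕ) = 5*(u1:ℕ)+5 := by rw [h2]; exact lim_mem hbB
          rw [eA, eB]
          omega
        · have eAB : lim A (u1 : ℕ) = lim B (u1 : ℕ) := by
            by_cases hm : (u1:ℕ) ∈ A
            · rw [lim_mem hm, lim_mem ((hmemB _).mpr (Or.inl ⟨hm, h1⟩))]
            · have : (u1:ℕ) ∉ B := fun hc => by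
                rcases (hmemB _).mp hc with ⟨h',-⟩ | h' <;> tauto
              rw [lim_not_mem hm, lim_not_mem this]
          rw [eAB]
          omega
    rw [Heq]
    exact ⟨RelIso.refl _⟩

end JIS19



/-- every JIS graph is an edge move distance graph.  If `G` is a finite JIS
graph, then there is a family `Q v` (indexed by the vertices of `G`) of finite simple
graphs on a common finite vertex set, all with the same number of edges and pairwise
non-isomorphic, such that for all distinct vertices `v`, `w`: `v` is adjacent to `w` in
`G` if and only if some single edge move (deleting one edge `e` of `Q v` and adding one
new edge `f` between a currently non-adjacent pair of vertices) transforms `Q v` into a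
graph isomorphic to `Q w`, i.e. `d_m(Q v, Q w) = 1`. -/
theorem isJIS_is_edge_move_distance_graph {V : Type*} [Fintype V] (G : SimpleGraph V)
    (hG : IsJIS G) :
    ∃ (W : Type) (_ : Fintype W) (Q : V → SimpleGraph W),
      (∀ v w : V, (Q v).edgeSet.ncard = (Q w).edgeSet.ncard) ∧
      (∀ v w : V, v ≠ w → ¬ Nonempty (Q v ≃g Q w)) ∧
      (∀ v w : V, v ≠ w → (G.Adj v w ↔
        ∃ e f : Sym2 W, e ∈ (Q v).edgeSet ∧ f ∉ (Q v).edgeSet ∧ ¬ f.IsDiag ∧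
          Nonempty (((Q v).deleteEdges {e} ⊔ SimpleGraph.fromEdgeSet {f}) ≃g Q w))) := by
  classical
  obtain ⟨n, hn, S, hSinj, hScard, hSadj⟩ := hG
  set M : ℕ := (Finset.univ.sup fun v : V => ((S v).sup id)) + 1 with hM
  have hrange : ∀ v : V, S v ⊆ Finset.range M := by
    intro v m hm
    rw [Finset.mem_range, hM]
    have h1 : m ≤ (S v).sup id := Finset.le_sup (f := id) hm
    have h2 : (S v).sup id ≤ Finset.univ.sup fun v : V => ((S v).sup id) :=
      Finset.le_sup (f := fun v : V => (S v).sup id) (Finset.mem_univ v)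
    omega
  refine ⟨Fin M × Fin (5*M+1), inferInstance, fun v => JIS19.BG M (S v), ?_, ?_, ?_⟩
  · intro v w
    exact JIS19.edge_count_eq M (S v) (S w) (hrange v) (hrange w)
      (by rw [hScard, hScard])
  · intro v w hvw
    exact JIS19.bg_not_iso M (S v) (S w) (hrange v) (hrange w)
      (fun h => hvw (hSinj h))
  · intro v w hvw
    rw [hSadj v w hvw]
    constructor
    · intro hint
      exact JIS19.forward (S v) (S w) (hrange v) (hrange w) (hScard v) (hScard w) hn hint
    · rintro ⟨e, f, he, hf, hfd, hiso⟩
      exact JIS19.converse (S v) (S w) (hrange v) (hrange w) (hScard v) (hScard w)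
        (fun h => hvw (hSinj h)) e f he hf hfd hiso
end
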